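/- If C is an inverse category such that for every object n the reduced coslice n ⫽ C has a finite type of objects, and X : C → 𝒰ˢ is Reedy fibrant, then X is pointwise essentially fibrant and all matching objects M_n^X are essentially fibrant. -/

import Mathlib

/-- The data of a two-level type theory (over Lean's strict layer, where
strict equality is `Eq` and strict isomorphism is `Equiv`): a fibrancy
predicate on pretypes, fibrant identity types with their elimination rule
into fibrant families, and closure of fibrant types under `Π` and `Σ`. -/
structure TLTT : Type 1 where
  Fib : Type → Prop
  Id : (A : Type) → A → A → Type
  idRefl : {A : Type} → (a : A) → Id A a a
  fibId : ∀ {A : Type}, Fib A → ∀ a b : A, Fib (Id A a b)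
  idElim : {A : Type} → (a : A) → (P : (b : A) → Id A a b → Type) →
    (∀ b p, Fib (P b p)) → P a (idRefl a) → ∀ b p, P b p
  idComp : ∀ {A : Type} (a : A) (P : (b : A) → Id A a b → Type)
      (hP : ∀ b p, Fib (P b p)) (d : P a (idRefl a)),
      idElim a P hP d a (idRefl a) = d
  fibUnit : Fib PUnit
  fibPi : ∀ {A : Type} {B : A → Type}, Fib A → (∀ a, Fib (B a)) → Fib (∀ a, B a)
  fibSigma : ∀ {A : Type} {B : A → Type}, Fib A → (∀ a, Fib (B a)) → Fib (Σ a, B a)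

namespace TwoLevel

/-- A pretype is essentially fibrant if it is strictly isomorphic to a fibrant type. -/
def EssFib (T : TLTT) (A : Type) : Prop := ∃ B : Type, T.Fib B ∧ Nonempty (A ≃ B)

/-- A pretype is finite if it is strictly isomorphic to some `Fin n`. -/
def IsFinite (A : Type) : Prop := ∃ n : ℕ, Nonempty (A ≃ Fin n)

/-- A map is a fibration if all of its strict fibres are essentially fibrant. -/
def IsFibration (T : TLTT) {E B : Type} (p : E → B) : Prop :=
  ∀ b : B, EssFib T { e : E // p e = b }

/-- Homotopy equivalence of pretypes with respect to the fibrant identity type. -/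
def IsHEquiv (T : TLTT) {A B : Type} (f : A → B) : Prop :=
  ∃ g : B → A, (∀ a, Nonempty (T.Id A (g (f a)) a)) ∧ (∀ b, Nonempty (T.Id B (f (g b)) b))

/-- A pretype is cofibrant if exponentiating out of it preserves fibrations. -/
def Cofibrant (T : TLTT) (A : Type) : Prop :=
  ∀ {X Y : Type} (p : X → Y), IsFibration T p → IsFibration T (fun g : A → X => p ∘ g)

/-- A cofibration is a complemented monomorphism with cofibrant complement. -/
def IsCofibration (T : TLTT) {A B : Type} (f : A → B) : Prop :=
  ∃ Ac : Type, Cofibrant T Ac ∧ ∃ g : Ac → B, Function.Bijective (Sum.elim f g)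

end TwoLevel
/-- Strict categories: categorical laws hold up to strict equality. -/
structure SCat : Type 1 where
  Obj : Type
  Hom : Obj → Obj → Type
  id : ∀ x, Hom x x
  comp : ∀ {x y z}, Hom y z → Hom x y → Hom x z
  id_comp : ∀ {x y} (f : Hom x y), comp (id y) f = f
  comp_id : ∀ {x y} (f : Hom x y), comp f (id x) = f
  assoc : ∀ {w x y z} (h : Hom y z) (g : Hom x y) (f : Hom w x),
    comp (comp h g) f = comp h (comp g f)

/-- Strict (pretype-valued) diagrams on a strict category. -/
structure SFunctor (C : SCat) : Type 1 where
  obj : C.Obj → Type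
  map : ∀ {x y}, C.Hom x y → obj x → obj y
  map_id : ∀ {x} (a : obj x), map (C.id x) a = a
  map_comp : ∀ {x y z} (g : C.Hom y z) (f : C.Hom x y) (a : obj x),
    map g (map f a) = map (C.comp g f) a

/-- Strict natural transformations of diagrams. -/
structure SNat {C : SCat} (X Y : SFunctor C) : Type where
  app : ∀ i, X.obj i → Y.obj i
  nat : ∀ {i j} (f : C.Hom i j) (a : X.obj i), Y.map f (app i a) = app j (X.map f a)

theorem SNat.ext' {C : SCat} {X Y : SFunctor C} {f g : SNat X Y}
    (h : f.app = g.app) : f = g := by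
  cases f; cases g; cases h; rfl

/-- Composition of natural transformations. -/
def natComp {C : SCat} {X Y Z : SFunctor C} (g : SNat Y Z) (f : SNat X Y) : SNat X Z :=
  ⟨fun i a => g.app i (f.app i a), by intro i j u a; rw [g.nat, f.nat]⟩

/-- The (strict) limit of a diagram, realised as the pretype of cones with tip `1`. -/
def SLimit (C : SCat) (X : SFunctor C) : Type :=
  { c : ∀ i, X.obj i // ∀ ⦃i j⦄ (f : C.Hom i j), X.map f (c i) = c j }

/-- The constant diagram. -/
def constF (C : SCat) (A : Type) : SFunctor C :=
  ⟨fun _ => A, fun _ a => a, fun _ => rfl, fun _ _ _ => rfl⟩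

/-- `f` is not an identity morphism. -/
def NotId (C : SCat) {x y : C.Obj} (f : C.Hom x y) : Prop :=
  ¬ ∃ _h : x = y, HEq f (C.id x)

/-- Objects of the reduced coslice `z ⫽ C`. -/
def RedCoslice (C : SCat) (z : C.Obj) : Type :=
  Σ y : C.Obj, { f : C.Hom z y // NotId C f }

/-- The reduced coslice category `z ⫽ C`. -/
def RedCosliceCat (C : SCat) (z : C.Obj) : SCat where
  Obj := RedCoslice C z
  Hom w w' := { h : C.Hom w.1 w'.1 // C.comp h w.2.1 = w'.2.1 }
  id w := ⟨C.id w.1, C.id_comp _⟩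
  comp h g := ⟨C.comp h.1 g.1, by rw [C.assoc, g.2, h.2]⟩
  id_comp f := Subtype.ext (C.id_comp _)
  comp_id f := Subtype.ext (C.comp_id _)
  assoc h g f := Subtype.ext (C.assoc _ _ _)

/-- Restriction of a diagram along the forgetful functor `z ⫽ C → C`. -/
def restrictRC {C : SCat} (X : SFunctor C) (z : C.Obj) : SFunctor (RedCosliceCat C z) where
  obj w := X.obj w.1
  map h a := X.map h.1 a
  map_id a := X.map_id a
  map_comp g f a := X.map_comp g.1 f.1 a

/-- The matching object `M_z^X`: the limit of `X` over the reduced coslice. -/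
def Matching {C : SCat} (X : SFunctor C) (z : C.Obj) : Type :=
  SLimit (RedCosliceCat C z) (restrictRC X z)

/-- The canonical map `X_z → M_z^X`. -/
def canMatch {C : SCat} (X : SFunctor C) (z : C.Obj) (x : X.obj z) : Matching X z :=
  ⟨fun w => X.map w.2.1 x, by
    intro w w' h
    exact (X.map_comp h.1 w.2.1 x).trans (by rw [h.2])⟩

/-- A diagram is Reedy fibrant if each canonical map `X_z → M_z^X` is a fibration. -/
def ReedyFibrant (T : TLTT) {C : SCat} (X : SFunctor C) : Prop :=
  ∀ z, TwoLevel.IsFibration T (canMatch X z)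

/-- The map induced on matching objects by a natural transformation. -/
def matchNat {C : SCat} {X Y : SFunctor C} (p : SNat X Y) (z : C.Obj) :
    Matching X z → Matching Y z :=
  fun c => ⟨fun w => p.app w.1 (c.1 w), by
    intro w w' h
    exact (p.nat h.1 (c.1 w)).trans (congrArg (p.app w'.1) (c.2 h))⟩

/-- The relative matching map `X_n → M_n^X ×_{M_n^Y} Y_n` of `p : X → Y`. -/
def relMatchMap {C : SCat} {X Y : SFunctor C} (p : SNat X Y) (n : C.Obj) :
    X.obj n → { q : Matching X n × Y.obj n // matchNat p n q.1 = canMatch Y n q.2 } :=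
  fun x => ⟨(canMatch X n x, p.app n x), by
    apply Subtype.ext
    funext w
    exact (p.nat w.2.1 x).symm⟩

/-- A natural transformation is a Reedy fibration if all of its relative matching
maps are fibrations. -/
def IsReedyFibration (T : TLTT) {C : SCat} {X Y : SFunctor C} (p : SNat X Y) : Prop :=
  ∀ n, TwoLevel.IsFibration T (relMatchMap p n)

/-- An inverse category: a strict category with a rank function such that every
morphism either strictly decreases the rank or is an identity. -/
def IsInverse (C : SCat) : Prop :=
  ∃ φ : C.Obj → ℕ, ∀ ⦃x y⦄ (f : C.Hom x y), φ x > φ y ∨ ∃ h : x = y, HEq f (C.id x)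

/-- The map induced on limits by a natural transformation. -/
def limMap {C : SCat} {X Y : SFunctor C} (p : SNat X Y) : SLimit C X → SLimit C Y :=
  fun c => ⟨fun i => p.app i (c.1 i), by
    intro i j f
    exact (p.nat f (c.1 i)).trans (congrArg (p.app j) (c.2 f))⟩

/-- An inverse category is admissible if Reedy fibrant diagrams over all of its
reduced coslices have essentially fibrant limits. -/
def Admissible (T : TLTT) (C : SCat) : Prop :=
  ∀ (z : C.Obj) (Y : SFunctor (RedCosliceCat C z)), ReedyFibrant T Y →
    TwoLevel.EssFib T (SLimit (RedCosliceCat C z) Y)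

/-- The pullback of diagrams `A ×_B X` along `f : A → B` and `p : X → B`,
computed pointwise. -/
def pbFunctor {C : SCat} {A B X : SFunctor C} (f : SNat A B) (p : SNat X B) :
    SFunctor C where
  obj i := { z : A.obj i × X.obj i // f.app i z.1 = p.app i z.2 }
  map g z := ⟨(A.map g z.1.1, X.map g z.1.2), by rw [← f.nat, ← p.nat, z.2]⟩
  map_id z := by
    apply Subtype.ext
    exact Prod.ext (A.map_id _) (X.map_id _)
  map_comp g h z := by
    apply Subtype.ext
    exact Prod.ext (A.map_comp _ _ _) (X.map_comp _ _ _)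

/-- Projection from the pullback of diagrams to the base. -/
def pbProj {C : SCat} {A B X : SFunctor C} (f : SNat A B) (p : SNat X B) :
    SNat (pbFunctor f p) A :=
  ⟨fun _ z => z.1.1, fun _ _ => rfl⟩

/-- A pushout square of diagrams, via its universal property. -/
def IsPushout {C : SCat} {P A B Q : SFunctor C} (f : SNat P A) (g : SNat P B)
    (ia : SNat A Q) (ib : SNat B Q) : Prop :=
  natComp ia f = natComp ib g ∧
  ∀ (W : SFunctor C) (u : SNat A W) (v : SNat B W),
    natComp u f = natComp v g → ∃! w : SNat Q W, natComp w ia = u ∧ natComp w ib = v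
/-- Hom-pretypes of the category `C* = 1 ⋆ C` obtained by freely adjoining an
initial object `none`. -/
def OHom (C : SCat) : Option C.Obj → Option C.Obj → Type
  | none, _ => PUnit
  | some _, none => Empty
  | some a, some b => C.Hom a b

def oid (C : SCat) : ∀ x : Option C.Obj, OHom C x x
  | none => PUnit.unit
  | some a => C.id a

def ocomp (C : SCat) : ∀ {x y z : Option C.Obj}, OHom C y z → OHom C x y → OHom C x z
  | none, _, _, _, _ => PUnit.unit
  | some _, none, _, _, f => f.elim
  | some _, some _, none, g, _ => g.elim
  | some _, some _, some _, g, f => C.comp g f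

/-- The category `C* = 1 ⋆ C`. -/
def CStar (C : SCat) : SCat where
  Obj := Option C.Obj
  Hom := OHom C
  id := oid C
  comp := ocomp C
  id_comp {x y} f := by
    cases x <;> cases y
    · rfl
    · rfl
    · exact f.elim
    · exact C.id_comp f
  comp_id {x y} f := by
    cases x <;> cases y
    · rfl
    · rfl
    · exact f.elim
    · exact C.comp_id f
  assoc {w x y z} h g f := by
    cases w <;> cases x <;> cases y <;> cases z <;>
      first
        | rfl
        | exact f.elim
        | exact g.elim
        | exact h.elim
        | exact C.assoc h g f

/-- Restriction of a diagram on `C*` to `C`. -/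
def restrictC {C : SCat} (X : SFunctor (CStar C)) : SFunctor C where
  obj i := X.obj (some i)
  map {i j} f a := X.map (x := some i) (y := some j) f a
  map_id a := X.map_id a
  map_comp g f a := X.map_comp (x := some _) (y := some _) (z := some _) g f a

/-- Restriction of a natural transformation of diagrams on `C*` to `C`. -/
def restrictNat {C : SCat} {F G : SFunctor (CStar C)} (η : SNat F G) :
    SNat (restrictC F) (restrictC G) :=
  ⟨fun i a => η.app (some i) a, fun f a => η.nat (i := some _) (j := some _) f a⟩

/-- The canonical map `X(*) → lim_C X`. -/
def canLim {C : SCat} (X : SFunctor (CStar C)) : X.obj none → SLimit C (restrictC X) :=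
  fun x => ⟨fun i => X.map (x := none) (y := some i) PUnit.unit x, by
    intro i j f
    exact X.map_comp (x := none) (y := some i) (z := some j) f PUnit.unit x⟩
/-- The product of a diagram `F` with the Yoneda (corepresentable) diagram `C(d, −)`. -/
def yonProd {C : SCat} (F : SFunctor C) (d : C.Obj) : SFunctor C where
  obj c := F.obj c × C.Hom d c
  map f z := (F.map f z.1, C.comp f z.2)
  map_id z := by
    obtain ⟨a, g⟩ := z
    show (F.map (C.id _) a, C.comp (C.id _) g) = (a, g)
    rw [F.map_id, C.id_comp]
  map_comp g f z := by
    obtain ⟨a, u⟩ := z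
    show (F.map g (F.map f a), C.comp g (C.comp f u)) = (F.map (C.comp g f) a, C.comp (C.comp g f) u)
    rw [F.map_comp, C.assoc]

/-- The exponential diagram `[F, X]`, defined via Yoneda:
`[F, X](d) = Nat(F × C(d,−), X)`. -/
def expF {C : SCat} (F X : SFunctor C) : SFunctor C where
  obj d := SNat (yonProd F d) X
  map {d d'} h η :=
    ⟨fun c z => η.app c (z.1, C.comp z.2 h), by
      intro c c' f z
      refine (η.nat f (z.1, C.comp z.2 h)).trans ?_
      show η.app c' (F.map f z.1, C.comp f (C.comp z.2 h)) = η.app c' (F.map f z.1, C.comp (C.comp f z.2) h)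
      rw [C.assoc]⟩
  map_id {d} η := by
    apply SNat.ext'
    funext c z
    show η.app c (z.1, C.comp z.2 (C.id d)) = η.app c z
    rw [C.comp_id]
    rfl
  map_comp g f η := by
    apply SNat.ext'
    funext c z
    show η.app c (z.1, C.comp (C.comp z.2 g) f) = η.app c (z.1, C.comp z.2 (C.comp g f))
    rw [C.assoc]

/-- Whiskering a natural transformation with the Yoneda factor. -/
def prodWhisker {C : SCat} {F G : SFunctor C} (τ : SNat F G) (d : C.Obj) :
    SNat (yonProd F d) (yonProd G d) :=
  ⟨fun c z => (τ.app c z.1, z.2), by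
    intro c c' f z
    show (G.map f (τ.app c z.1), C.comp f z.2) = (τ.app c' (F.map f z.1), C.comp f z.2)
    rw [τ.nat]⟩

/-- The natural transformation `(− ∘ τ) : [G, X] → [F, X]` induced on exponentials
by precomposition with `τ : F → G`. -/
def expMap {C : SCat} {F G : SFunctor C} (τ : SNat F G) (X : SFunctor C) :
    SNat (expF G X) (expF F X) :=
  ⟨fun d η => natComp η (prodWhisker τ d), fun _ _ => SNat.ext' rfl⟩
/-- Morphisms `[m] → [k]` of the semi-simplex category `Δ₊ᵒᵖ`:
strictly monotone maps `Fin (k+1) → Fin (m+1)`. -/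
def DeltaHom (m k : ℕ) : Type := { f : Fin (k+1) → Fin (m+1) // StrictMono f }

/-- The semi-simplex category `Δ₊ᵒᵖ`. -/
@[reducible] def DeltaOp : SCat where
  Obj := ℕ
  Hom := DeltaHom
  id _ := ⟨_root_.id, strictMono_id⟩
  comp g f := ⟨f.1 ∘ g.1, f.2.comp g.2⟩
  id_comp _ := Subtype.ext rfl
  comp_id _ := Subtype.ext rfl
  assoc _ _ _ := Subtype.ext rfl

/-- A semi-simplicial set/type is a diagram on `Δ₊ᵒᵖ`. -/
abbrev SSDiagram : Type 1 := SFunctor DeltaOp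

theorem strictMono_fin_le {a b : ℕ} (g : Fin a → Fin b) (hg : StrictMono g) : a ≤ b := by
  simpa using Fintype.card_le_of_injective g hg.injective

set_option linter.deprecated false in
theorem strictMono_fin_id {a : ℕ} (g : Fin a → Fin a) (hg : StrictMono g) :
    ∀ i, g i = i := by
  have hsur : Function.Surjective g := Finite.injective_iff_surjective.mp hg.injective
  have hid : g = fun i => i := by
    apply (hg.range_inj (g := _root_.id) strictMono_id).mp
    rw [Set.range_id]
    exact Set.range_eq_univ.mpr hsur
  intro i; rw [hid]

/-- A subfunctor of the Yoneda (representable) semi-simplicial set `Δ^n`,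
given by a family of propositions closed under the functorial action. -/
structure SubP (n : ℕ) : Type where
  mem : ∀ k : ℕ, DeltaHom n k → Prop
  closed : ∀ ⦃k l : ℕ⦄ (g : DeltaHom k l) (f : DeltaHom n k),
    mem k f → mem l (DeltaOp.comp g f)

/-- The semi-simplicial set associated to a subfunctor of `Δ^n`. -/
def SubP.toF {n : ℕ} (S : SubP n) : SSDiagram where
  obj k := { f : DeltaHom n k // S.mem k f }
  map g f := ⟨DeltaOp.comp g f.1, S.closed g f.1 f.2⟩
  map_id _ := Subtype.ext (DeltaOp.id_comp _)
  map_comp _ _ _ := Subtype.ext (DeltaOp.assoc _ _ _).symm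

def SubP.le {n : ℕ} (S S' : SubP n) : Prop := ∀ k f, S.mem k f → S'.mem k f

/-- The inclusion of sub-semi-simplicial sets. -/
def SubP.incl {n : ℕ} {S S' : SubP n} (h : S.le S') : SNat S.toF S'.toF :=
  ⟨fun k f => ⟨f.1, h k f.1 f.2⟩, fun _ _ => rfl⟩

/-- The full subfunctor, i.e. the representable `Δ^n` itself. -/
def fullSub (n : ℕ) : SubP n := ⟨fun _ _ => True, by intros; trivial⟩

/-- The membership predicate of the spine `Sp^n`: all vertices, together with
the consecutive edges `i → i+1`. -/
def spineMem (n : ℕ) : ∀ k : ℕ, DeltaHom n k → Prop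
  | 0, _ => True
  | 1, f => (f.1 1 : ℕ) = (f.1 0 : ℕ) + 1
  | _ + 2, _ => False

/-- The spine `Sp^n` as a subfunctor of `Δ^n`. -/
def spineSub (n : ℕ) : SubP n where
  mem := spineMem n
  closed := by
    intro k l g f hf
    have hlk : l + 1 ≤ k + 1 := strictMono_fin_le g.1 g.2
    rcases l with _ | _ | l
    · trivial
    · rcases k with _ | _ | k
      · exact absurd hlk (by omega)
      · show ((f.1 (g.1 1) : Fin (n+1)) : ℕ) = ((f.1 (g.1 0) : Fin (n+1)) : ℕ) + 1
        have h0 : g.1 0 = 0 := strictMono_fin_id g.1 g.2 0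
        have h1 : g.1 1 = 1 := strictMono_fin_id g.1 g.2 1
        rw [h0, h1]
        exact hf
      · exact hf.elim
    · rcases k with _ | _ | k
      · exact absurd hlk (by omega)
      · exact absurd hlk (by omega)
      · exact hf.elim

/-- The membership predicate of the horn `Λ^n_k`: everything except the top cell
and the `k`-th face (the strictly monotone map skipping the value `k`,
described numerically). -/
def hornMem (n k : ℕ) (m : ℕ) (f : DeltaHom n m) : Prop :=
  if m = n then False
  else if m + 1 = n then
    ¬ (∀ i : Fin (m + 1), (f.1 i : ℕ) = if (i : ℕ) < k then (i : ℕ) else (i : ℕ) + 1)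
  else True

/-- The horn `Λ^n_k` as a subfunctor of `Δ^n`. -/
def hornSub (n k : ℕ) : SubP n where
  mem := hornMem n k
  closed := by
    intro m l g f hf
    have hlm : l + 1 ≤ m + 1 := strictMono_fin_le g.1 g.2
    have hmn : m + 1 ≤ n + 1 := strictMono_fin_le f.1 f.2
    unfold hornMem at hf ⊢
    by_cases hl : l = n
    · rw [if_pos hl]
      have hm : m = n := by omega
      rw [if_pos hm] at hf
      exact hf
    · rw [if_neg hl]
      by_cases hl1 : l + 1 = n
      · rw [if_pos hl1]
        by_cases hm : m = n
        · rw [if_pos hm] at hf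
          exact hf.elim
        · have hm1 : m + 1 = n := by omega
          rw [if_neg hm, if_pos hm1] at hf
          intro hs
          apply hf
          intro i
          have hml : m = l := by omega
          subst hml
          have hgi : g.1 i = i := strictMono_fin_id g.1 g.2 i
          have h2 : ((f.1 (g.1 i) : Fin (n+1)) : ℕ) =
              if (i : ℕ) < k then (i : ℕ) else (i : ℕ) + 1 := hs i
          rw [hgi] at h2
          exact h2
      · rw [if_neg hl1]
        trivial

/-- The spine is contained in `Δ^n`. -/
theorem spine_le_full (n : ℕ) : (spineSub n).le (fullSub n) := fun _ _ _ => trivial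

/-- The horn is contained in `Δ^n`. -/
theorem horn_le_full (n k : ℕ) : (hornSub n k).le (fullSub n) := fun _ _ _ => trivial

/-- The two vertex inclusions of an edge. -/
def V0 : DeltaHom 1 0 :=
  ⟨fun _ => 0, by
    intro a b hab
    exfalso
    have ha := a.isLt
    have hb := b.isLt
    rw [Fin.lt_def] at hab
    omega⟩

def V1 : DeltaHom 1 0 :=
  ⟨fun _ => 1, by
    intro a b hab
    exfalso
    have ha := a.isLt
    have hb := b.isLt
    rw [Fin.lt_def] at hab
    omega⟩

/-- The three faces of a 2-simplex: `Dface j` skips the vertex `j`. -/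
def Dface (j : Fin 3) : DeltaHom 2 1 := ⟨Fin.succAbove j, Fin.strictMono_succAbove j⟩

/-- The fibre of `X₁` over a pair of vertices: edges from `a` to `b`. -/
def EdgeT (X : SSDiagram) (a b : X.obj 0) : Type :=
  { e : X.obj 1 // X.map (x := 1) (y := 0) V0 e = a ∧ X.map (x := 1) (y := 0) V1 e = b }

/-- The fibre of `X₂` over a boundary triangle `(f, g, h)`. -/
def TriT (X : SSDiagram) {a b c : X.obj 0}
    (f : EdgeT X a b) (g : EdgeT X b c) (h : EdgeT X a c) : Type :=
  { t : X.obj 2 // X.map (x := 2) (y := 1) (Dface 2) t = f.1 ∧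
      X.map (x := 2) (y := 1) (Dface 0) t = g.1 ∧ X.map (x := 2) (y := 1) (Dface 1) t = h.1 }

/-- The Segal condition: locality with respect to all spine inclusions. -/
def SegalCondition (T : TLTT) (X : SSDiagram) : Prop :=
  ∀ n : ℕ, TwoLevel.IsHEquiv T
    (fun η : SNat (fullSub n).toF X => natComp η (SubP.incl (spine_le_full n)))
/-- The type of homotopy equivalences (with respect to the fibrant identity
type) between two pretypes. -/
def HEquivT (T : TLTT) (A B : Type) : Type :=
  Σ f : A → B, Σ g : B → A, (∀ a, T.Id A (g (f a)) a) × (∀ b, T.Id B (f (g b)) b)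

/-- The identity equivalence. -/
def idEquivT (T : TLTT) (A : Type) : HEquivT T A A :=
  ⟨_root_.id, _root_.id, fun a => T.idRefl a, fun b => T.idRefl b⟩
section ReedyProofAux
open TwoLevel

theorem essFib_of_equiv {T : TLTT} {A B : Type} (e : A ≃ B) (h : EssFib T B) :
    EssFib T A := by
  obtain ⟨F, hF, ⟨e'⟩⟩ := h
  exact ⟨F, hF, ⟨e.trans e'⟩⟩

theorem essFib_sigma {T : TLTT} {A : Type} {B : A → Type} (hA : EssFib T A)
    (hB : ∀ a, EssFib T (B a)) : EssFib T (Σ a, B a) := by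
  obtain ⟨A', hA', ⟨eA⟩⟩ := hA
  choose Bf hBf hBe using hB
  refine ⟨Σ a' : A', Bf (eA.symm a'), T.fibSigma hA' (fun a' => hBf _), ⟨?_⟩⟩
  exact (Equiv.sigmaCongrRight fun a => Classical.choice (hBe a)).trans
    (Equiv.sigmaCongrLeft eA.symm).symm

theorem my_sigma_ext {A : Type _} {B : A → Type _} {x y : Sigma B}
    (h1 : x.1 = y.1) (h2 : HEq x.2 y.2) : x = y := by
  obtain ⟨a, b⟩ := x
  obtain ⟨a', b'⟩ := y
  dsimp at h1 h2
  subst h1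
  rw [eq_of_heq h2]

theorem subtype_heq {A : Type} {p q : A → Prop} (hpq : p = q)
    {a : {x // p x}} {b : {x // q x}} (h : a.1 = b.1) : HEq a b := by
  subst hpq
  exact heq_of_eq (Subtype.ext h)

theorem fib_transfer {T : TLTT} {A M' M : Type} (f' : A → M') (f : A → M)
    (μ : M' → M) (h1 : ∀ x, μ (f' x) = f x) (h2 : ∀ x m, f x = μ m → f' x = m)
    (hf : IsFibration T f) : IsFibration T f' := by
  intro m
  refine essFib_of_equiv (Equiv.subtypeEquivRight (fun x => ?_)) (hf (μ m))
  exact ⟨fun h => by rw [← h1, h], fun h => h2 x m h⟩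

def totalEquiv {A M : Type} (f : A → M) : A ≃ Σ m : M, {x : A // f x = m} where
  toFun x := ⟨f x, x, rfl⟩
  invFun p := p.2.1
  left_inv x := rfl
  right_inv := by rintro ⟨m, x, rfl⟩; rfl

theorem rank_lt {D : SCat} {φ : D.Obj → ℕ}
    (hφ : ∀ ⦃x y⦄ (f : D.Hom x y), φ x > φ y ∨ ∃ h : x = y, HEq f (D.id x))
    {x y : D.Obj} (f : D.Hom x y) (hf : NotId D f) : φ x > φ y :=
  (hφ f).resolve_right hf

theorem redCoslice_id (C : SCat) (n : C.Obj) {w w' : RedCoslice C n}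
    (u : (RedCosliceCat C n).Hom w w') (e1 : w.1 = w'.1) (hu : HEq u.1 (C.id w.1)) :
    ∃ h : w = w', HEq u ((RedCosliceCat C n).id w) := by
  obtain ⟨a, f, hf⟩ := w
  obtain ⟨b, g, hg⟩ := w'
  have e1' : a = b := e1
  subst e1'
  have h1 : u.1 = C.id a := eq_of_heq hu
  have h2 : f = g := by
    have hu2 : C.comp u.1 f = g := u.2
    rw [← hu2, h1, C.id_comp]
  subst h2
  exact ⟨rfl, heq_of_eq (Subtype.ext h1)⟩

theorem redCoslice_inverse {C : SCat} (φ : C.Obj → ℕ)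
    (hφ : ∀ ⦃x y⦄ (f : C.Hom x y), φ x > φ y ∨ ∃ h : x = y, HEq f (C.id x)) (n : C.Obj) :
    ∀ ⦃w w' : (RedCosliceCat C n).Obj⦄ (u : (RedCosliceCat C n).Hom w w'),
      φ w.1 > φ w'.1 ∨ ∃ h : w = w', HEq u ((RedCosliceCat C n).id w) := by
  intro w w' u
  rcases hφ u.1 with h | ⟨h, hh⟩
  · exact Or.inl h
  · exact Or.inr (redCoslice_id C n u h hh)

/-- Full subcategory on a predicate. -/
def fullSubCat (D : SCat) (P : D.Obj → Prop) : SCat where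
  Obj := {x // P x}
  Hom x y := D.Hom x.1 y.1
  id x := D.id x.1
  comp g f := D.comp g f
  id_comp f := D.id_comp f
  comp_id f := D.comp_id f
  assoc h g f := D.assoc h g f

def restrictFull {D : SCat} (Y : SFunctor D) (P : D.Obj → Prop) :
    SFunctor (fullSubCat D P) where
  obj x := Y.obj x.1
  map f a := Y.map f a
  map_id a := Y.map_id a
  map_comp g f a := Y.map_comp g f a

def cosliceBack {D : SCat} {P : D.Obj → Prop} (Y : SFunctor D) (w : (fullSubCat D P).Obj)
    (hP : ∀ o : RedCoslice D w.1, P o.1)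
    (o : RedCoslice D w.1) : RedCoslice (fullSubCat D P) w :=
  ⟨⟨o.1, hP o⟩, o.2.1, fun ⟨h1, h2⟩ => o.2.2 ⟨congrArg Subtype.val h1, h2⟩⟩

def matchBack {D : SCat} {P : D.Obj → Prop} (Y : SFunctor D) (w : (fullSubCat D P).Obj)
    (hP : ∀ o : RedCoslice D w.1, P o.1) :
    Matching (restrictFull Y P) w → Matching Y w.1 :=
  fun m => ⟨fun o => m.1 (cosliceBack Y w hP o),
    fun o o' u => m.2 (i := cosliceBack Y w hP o) (j := cosliceBack Y w hP o') ⟨u.1, u.2⟩⟩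

theorem rf_fullSub (T : TLTT) {D : SCat} {P : D.Obj → Prop} (Y : SFunctor D)
    (hP : ∀ (w : (fullSubCat D P).Obj) (o : RedCoslice D w.1), P o.1)
    (hR : ReedyFibrant T Y) : ReedyFibrant T (restrictFull Y P) := by
  intro w
  refine fib_transfer _ (canMatch Y w.1) (matchBack Y w (hP w)) (fun x => ?_)
    (fun x m h => ?_) (hR w.1)
  · exact Subtype.ext (funext fun o => rfl)
  · apply Subtype.ext
    funext o'
    exact congrFun (congrArg Subtype.val h)
      ⟨o'.1.1, o'.2.1, fun ⟨h1, h2⟩ => o'.2.2 ⟨Subtype.ext h1, h2⟩⟩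

def neZ {D : SCat} {φ : D.Obj → ℕ}
    (hφ : ∀ ⦃x y⦄ (f : D.Hom x y), φ x > φ y ∨ ∃ h : x = y, HEq f (D.id x))
    {z : D.Obj} (o : RedCoslice D z) : o.1 ≠ z := fun ho => by
  have h := rank_lt hφ o.2.1 o.2.2
  have h2 := congrArg φ ho
  omega

def rmap {D : SCat} (φ : D.Obj → ℕ)
    (hφ : ∀ ⦃x y⦄ (f : D.Hom x y), φ x > φ y ∨ ∃ h : x = y, HEq f (D.id x))
    (z : D.Obj) (Y : SFunctor D) :
    SLimit (fullSubCat D (fun x => x ≠ z)) (restrictFull Y (fun x => x ≠ z)) →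
      Matching Y z :=
  fun c' => ⟨fun o => c'.1 ⟨o.1, neZ hφ o⟩,
    fun o o' u => c'.2 (i := ⟨o.1, neZ hφ o⟩) (j := ⟨o'.1, neZ hφ o'⟩) u.1⟩

open Classical in
noncomputable def peelEquiv {D : SCat} (φ : D.Obj → ℕ)
    (hφ : ∀ ⦃x y⦄ (f : D.Hom x y), φ x > φ y ∨ ∃ h : x = y, HEq f (D.id x))
    (z : D.Obj) (hz : ∀ x, φ x ≤ φ z) (Y : SFunctor D) :
    SLimit D Y ≃
      Σ c' : SLimit (fullSubCat D (fun x => x ≠ z)) (restrictFull Y (fun x => x ≠ z)),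
        {x : Y.obj z // canMatch Y z x = rmap φ hφ z Y c'} where
  toFun c := ⟨⟨fun w => c.1 w.1, fun w w' f => c.2 f⟩, c.1 z,
    Subtype.ext (funext fun o => c.2 o.2.1)⟩
  invFun q := ⟨fun i => if h : i = z then cast (congrArg Y.obj h.symm) q.2.1
      else q.1.1 ⟨i, h⟩, by
    intro a b f
    dsimp only
    by_cases ha : a = z
    · obtain rfl : z = a := ha.symm
      by_cases hb : b = z
      · obtain rfl : z = b := hb.symm
        have hid : f = D.id z := by
          rcases hφ f with h | ⟨-, hh⟩
          · exact absurd h (lt_irrefl _)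
          · exact eq_of_heq hh
        rw [hid, Y.map_id]
      · have hnf : NotId D f := fun ⟨h, _⟩ => hb h.symm
        exact (congrArg (Y.map f) (dif_pos rfl)).trans
          ((congrFun (congrArg Subtype.val q.2.2) ⟨b, f, hnf⟩).trans (dif_neg (t := fun h : b = z => cast (congrArg Y.obj h.symm) q.2.1)
            (e := fun h : ¬ b = z => q.1.1 ⟨b, h⟩) hb).symm)
    · by_cases hb : b = z
      · obtain rfl : z = b := hb.symm
        exfalso
        rcases hφ f with h | ⟨h, -⟩
        · have := hz a; omega
        · exact ha h
      · exact (congrArg (Y.map f) (dif_neg ha)).trans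
          ((q.1.2 (i := ⟨a, ha⟩) (j := ⟨b, hb⟩) f).trans (dif_neg (t := fun h : b = z => cast (congrArg Y.obj h.symm) q.2.1)
            (e := fun h : ¬ b = z => q.1.1 ⟨b, h⟩) hb).symm)⟩
  left_inv c := by
    apply Subtype.ext
    funext i
    dsimp only
    by_cases h : i = z
    · obtain rfl : z = i := h.symm
      exact dif_pos rfl
    · exact dif_neg h
  right_inv q := by
    obtain ⟨c', x, hx⟩ := q
    refine my_sigma_ext ?h1
      (subtype_heq (congrArg
        (fun d => fun y => canMatch Y z y = rmap φ hφ z Y d) ?h1) (dif_pos rfl))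
    exact Subtype.ext (funext fun w => dif_neg w.2)

theorem lim_essFib (T : TLTT) :
    ∀ (k : ℕ) (D : SCat) (φ : D.Obj → ℕ)
      (_ : ∀ ⦃x y⦄ (f : D.Hom x y), φ x > φ y ∨ ∃ h : x = y, HEq f (D.id x))
      (_ : D.Obj ≃ Fin k) (Y : SFunctor D), ReedyFibrant T Y →
      EssFib T (SLimit D Y) := by
  intro k
  induction k with
  | zero =>
    intro D φ hφ e Y _
    refine ⟨PUnit, T.fibUnit, ⟨⟨fun _ => PUnit.unit,
      fun _ => ⟨fun i => (e i).elim0, fun i _ _ => (e i).elim0⟩, ?_, fun _ => rfl⟩⟩⟩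
    intro c
    apply Subtype.ext
    funext i
    exact (e i).elim0
  | succ k ih =>
    intro D φ hφ e Y hRF
    classical
    have hfin : Finite D.Obj := Finite.intro e
    have hne : Nonempty D.Obj := ⟨e.symm 0⟩
    obtain ⟨z, hz⟩ := Finite.exists_max φ
    have e' : {x : D.Obj // x ≠ z} ≃ Fin k :=
      ((e.subtypeEquiv (fun a => not_congr
        ⟨fun h => congrArg e h, fun h => e.injective h⟩)).trans
        (finSuccAboveEquiv (e z)).symm)
    have hφ' : ∀ ⦃x y : (fullSubCat D (fun x => x ≠ z)).Obj⦄
        (f : (fullSubCat D (fun x => x ≠ z)).Hom x y),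
        φ x.1 > φ y.1 ∨ ∃ h : x = y, HEq f ((fullSubCat D (fun x => x ≠ z)).id x) := by
      intro x y f
      rcases hφ f with h | ⟨h, hh⟩
      · exact Or.inl h
      · obtain ⟨a, ha⟩ := x
        obtain ⟨b, hb⟩ := y
        have h' : a = b := h
        subst h'
        exact Or.inr ⟨rfl, hh⟩
    have hP : ∀ (w : (fullSubCat D (fun x => x ≠ z)).Obj) (o : RedCoslice D w.1),
        o.1 ≠ z := by
      intro w o ho
      have h1 := rank_lt hφ o.2.1 o.2.2
      have h2 := hz w.1
      have h3 := congrArg φ ho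
      omega
    have hRF' : ReedyFibrant T (restrictFull Y (fun x => x ≠ z)) :=
      rf_fullSub T Y hP hRF
    exact essFib_of_equiv (peelEquiv φ hφ z hz Y)
      (essFib_sigma (ih (fullSubCat D (fun x => x ≠ z)) (fun x => φ x.1) hφ' e'
        (restrictFull Y (fun x => x ≠ z)) hRF')
        (fun c' => hRF z (rmap φ hφ z Y c')))

def cosliceBack2 {C : SCat} {φ : C.Obj → ℕ}
    (hφ : ∀ ⦃x y⦄ (f : C.Hom x y), φ x > φ y ∨ ∃ h : x = y, HEq f (C.id x))
    {n : C.Obj} (w : RedCoslice C n) (o : RedCoslice C w.1) :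
    RedCoslice (RedCosliceCat C n) w :=
  ⟨⟨o.1, C.comp o.2.1 w.2.1, by
      rintro ⟨h, -⟩
      have r1 := rank_lt hφ w.2.1 w.2.2
      have r2 := rank_lt hφ o.2.1 o.2.2
      have r3 := congrArg φ h
      omega⟩,
   ⟨o.2.1, rfl⟩, by
      rintro ⟨h, -⟩
      have r2 := rank_lt hφ o.2.1 o.2.2
      have h1 : w.1 = o.1 := congrArg Sigma.fst h
      have r3 := congrArg φ h1
      omega⟩

def matchBack2 {C : SCat} {φ : C.Obj → ℕ}
    (hφ : ∀ ⦃x y⦄ (f : C.Hom x y), φ x > φ y ∨ ∃ h : x = y, HEq f (C.id x))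
    {n : C.Obj} (X : SFunctor C) (w : RedCoslice C n) :
    Matching (restrictRC X n) w → Matching X w.1 :=
  fun m => ⟨fun o => m.1 (cosliceBack2 hφ w o), by
    intro o o' u
    exact m.2 (i := cosliceBack2 hφ w o) (j := cosliceBack2 hφ w o')
      ⟨⟨u.1, by
        show C.comp u.1 (C.comp o.2.1 w.2.1) = C.comp o'.2.1 w.2.1
        rw [← C.assoc, u.2]⟩, Subtype.ext u.2⟩⟩

theorem rf_coslice (T : TLTT) {C : SCat} {φ : C.Obj → ℕ}
    (hφ : ∀ ⦃x y⦄ (f : C.Hom x y), φ x > φ y ∨ ∃ h : x = y, HEq f (C.id x))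
    (n : C.Obj) (X : SFunctor C) (hR : ReedyFibrant T X) :
    ReedyFibrant T (restrictRC X n) := by
  intro w
  refine fib_transfer _ (canMatch X w.1) (matchBack2 hφ X w) (fun x => ?_)
    (fun x m h => ?_) (hR w.1)
  · exact Subtype.ext (funext fun o => rfl)
  · apply Subtype.ext
    funext o'
    obtain ⟨⟨j, g, hg⟩, ⟨u₀, hcomp⟩, hnid⟩ := o'
    dsimp only at u₀ hcomp hnid
    subst hcomp
    have pnu : NotId C u₀ := by
      rintro ⟨hij, hu⟩
      exact hnid (redCoslice_id C n (w := w) (w' := ⟨j, C.comp u₀ w.2.1, hg⟩) ⟨u₀, rfl⟩ hij hu)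
    exact congrFun (congrArg Subtype.val h) ⟨j, u₀, pnu⟩

end ReedyProofAux

/-- if all reduced coslices of an inverse category `C` have finite
pretypes of objects, then every Reedy fibrant diagram on `C` is pointwise
essentially fibrant and has essentially fibrant matching objects. -/
theorem reedy_fibrant_pointwise_fibrant (T : TLTT) (C : SCat) (hC : IsInverse C)
    (hfin : ∀ n, TwoLevel.IsFinite (RedCoslice C n)) (X : SFunctor C)
    (hR : ReedyFibrant T X) :
    (∀ n, TwoLevel.EssFib T (X.obj n)) ∧ (∀ n, TwoLevel.EssFib T (Matching X n)) := by
  obtain ⟨φ, hφ⟩ := hC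
  have hM : ∀ n, TwoLevel.EssFib T (Matching X n) := by
    intro n
    obtain ⟨k, ⟨e⟩⟩ := hfin n
    exact lim_essFib T k (RedCosliceCat C n) (fun w => φ w.1)
      (redCoslice_inverse φ hφ n) e (restrictRC X n) (rf_coslice T hφ n X hR)
  refine ⟨fun n => ?_, hM⟩
  exact essFib_of_equiv (totalEquiv (canMatch X n)) (essFib_sigma (hM n) (hR n))
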